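/- If ẽ = 0 and e ≠ 0, the Verma module of the Takiff superalgebra of gl(1|1) with highest weight (n,e,ñ,0) has, up to scalar multiples, a unique nonzero singular vector other than v, namely ψ̃⁻v; the submodule it generates is 2-dimensional (spanned by ψ̃⁻v and ψ̃⁻ψ⁻v) and is the maximal proper submodule, so the irreducible quotient is 2-dimensional. -/

import Mathlib

/-- A representation of the Takiff superalgebra `g̃l(1|1)` of `gl(1|1)` on a complex
vector space `V`: linear endomorphisms for the even generators `N, E, Ñ, Ẽ` and the odd
generators `ψ⁺, ψ⁻, ψ̃⁺, ψ̃⁻`, subject to all the (super)commutation relations: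
`[N,ψ±] = ±ψ±`, `{ψ⁺,ψ⁻} = E`, `[N,ψ̃±] = [Ñ,ψ±] = ±ψ̃±`, `{ψ⁺,ψ̃⁻} = {ψ̃⁺,ψ⁻} = Ẽ`,
with all remaining (super)brackets equal to zero. -/
structure TakiffGl11Rep (V : Type*) [AddCommGroup V] [Module ℂ V] where
  N : V →ₗ[ℂ] V
  E : V →ₗ[ℂ] V
  Nt : V →ₗ[ℂ] V
  Et : V →ₗ[ℂ] V
  pp : V →ₗ[ℂ] V
  pm : V →ₗ[ℂ] V
  tp : V →ₗ[ℂ] V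
  tm : V →ₗ[ℂ] V
  rel_N_E : N ∘ₗ E = E ∘ₗ N
  rel_N_Nt : N ∘ₗ Nt = Nt ∘ₗ N
  rel_N_Et : N ∘ₗ Et = Et ∘ₗ N
  rel_E_Nt : E ∘ₗ Nt = Nt ∘ₗ E
  rel_E_Et : E ∘ₗ Et = Et ∘ₗ E
  rel_Nt_Et : Nt ∘ₗ Et = Et ∘ₗ Nt
  rel_N_pp : N ∘ₗ pp - pp ∘ₗ N = pp
  rel_N_pm : N ∘ₗ pm - pm ∘ₗ N = -pm
  rel_N_tp : N ∘ₗ tp - tp ∘ₗ N = tp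
  rel_N_tm : N ∘ₗ tm - tm ∘ₗ N = -tm
  rel_E_pp : E ∘ₗ pp = pp ∘ₗ E
  rel_E_pm : E ∘ₗ pm = pm ∘ₗ E
  rel_E_tp : E ∘ₗ tp = tp ∘ₗ E
  rel_E_tm : E ∘ₗ tm = tm ∘ₗ E
  rel_Nt_pp : Nt ∘ₗ pp - pp ∘ₗ Nt = tp
  rel_Nt_pm : Nt ∘ₗ pm - pm ∘ₗ Nt = -tm
  rel_Nt_tp : Nt ∘ₗ tp = tp ∘ₗ Nt
  rel_Nt_tm : Nt ∘ₗ tm = tm ∘ₗ Nt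
  rel_Et_pp : Et ∘ₗ pp = pp ∘ₗ Et
  rel_Et_pm : Et ∘ₗ pm = pm ∘ₗ Et
  rel_Et_tp : Et ∘ₗ tp = tp ∘ₗ Et
  rel_Et_tm : Et ∘ₗ tm = tm ∘ₗ Et
  rel_pp_pp : pp ∘ₗ pp = 0
  rel_pm_pm : pm ∘ₗ pm = 0
  rel_tp_tp : tp ∘ₗ tp = 0
  rel_tm_tm : tm ∘ₗ tm = 0
  rel_pp_pm : pp ∘ₗ pm + pm ∘ₗ pp = E
  rel_pp_tp : pp ∘ₗ tp + tp ∘ₗ pp = 0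
  rel_pp_tm : pp ∘ₗ tm + tm ∘ₗ pp = Et
  rel_pm_tp : pm ∘ₗ tp + tp ∘ₗ pm = Et
  rel_pm_tm : pm ∘ₗ tm + tm ∘ₗ pm = 0
  rel_tp_tm : tp ∘ₗ tm + tm ∘ₗ tp = 0

namespace TakiffGl11Rep

variable {V : Type*} [AddCommGroup V] [Module ℂ V] (ρ : TakiffGl11Rep V)

/-- A submodule invariant under the action of `g̃l(1|1)`. -/
def Invariant (W : Submodule ℂ V) : Prop :=
  ∀ w ∈ W, ρ.N w ∈ W ∧ ρ.E w ∈ W ∧ ρ.Nt w ∈ W ∧ ρ.Et w ∈ W ∧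
    ρ.pp w ∈ W ∧ ρ.pm w ∈ W ∧ ρ.tp w ∈ W ∧ ρ.tm w ∈ W

/-- `v` is a highest weight vector of weight `(n, e, ñ, ẽ)`: a nonzero simultaneous
eigenvector of the Cartan generators annihilated by the raising operators `ψ⁺, ψ̃⁺`. -/
def IsHW (v : V) (n e nt et : ℂ) : Prop :=
  v ≠ 0 ∧ ρ.N v = n • v ∧ ρ.E v = e • v ∧ ρ.Nt v = nt • v ∧ ρ.Et v = et • v ∧
    ρ.pp v = 0 ∧ ρ.tp v = 0

/-- `(V, v)` is the Verma module of highest weight `(n, e, ñ, ẽ)`: `v` is a highest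
weight vector of that weight, the lowering operators `ψ⁻, ψ̃⁻` act freely on `v`
(`v, ψ⁻v, ψ̃⁻v, ψ̃⁻ψ⁻v` are linearly independent), and `v` generates `V`. -/
def IsVerma (v : V) (n e nt et : ℂ) : Prop :=
  ρ.IsHW v n e nt et ∧
  LinearIndependent ℂ ![v, ρ.pm v, ρ.tm v, ρ.tm (ρ.pm v)] ∧
  ∀ W : Submodule ℂ V, ρ.Invariant W → v ∈ W → W = ⊤

/-- The quadratic Casimir `Q₁ = NẼ + ÑE + ψ⁻ψ̃⁺ + ψ̃⁻ψ⁺`. -/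
def Q₁ : V →ₗ[ℂ] V := ρ.N ∘ₗ ρ.Et + ρ.Nt ∘ₗ ρ.E + ρ.pm ∘ₗ ρ.tp + ρ.tm ∘ₗ ρ.pp

/-- The quadratic Casimir `Q₂ = ÑẼ + ψ̃⁻ψ̃⁺`. -/
def Q₂ : V →ₗ[ℂ] V := ρ.Nt ∘ₗ ρ.Et + ρ.tm ∘ₗ ρ.tp

end TakiffGl11Rep

/-- If `ẽ = 0` and `e ≠ 0`, the Verma module of the Takiff superalgebra of `gl(1|1)`
with highest weight `(n, e, ñ, 0)` has, up to scalar multiples, a unique nonzero singular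
vector other than `v`, namely `ψ̃⁻v`; the submodule it generates is the 2-dimensional
span of `ψ̃⁻v` and `ψ̃⁻ψ⁻v`, it is the maximal proper invariant submodule, and the
irreducible quotient is 2-dimensional. -/
theorem takiff_gl11_verma_semitypical_structure {V : Type*} [AddCommGroup V] [Module ℂ V]
    (ρ : TakiffGl11Rep V) (v : V) (n e nt : ℂ) (h : ρ.IsVerma v n e nt 0) (he : e ≠ 0) :
    -- `ψ̃⁻v` is a singular vector
    (ρ.pp (ρ.tm v) = 0 ∧ ρ.tp (ρ.tm v) = 0 ∧ ρ.tm v ≠ 0) ∧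
    -- uniqueness: every singular (weight) vector is a multiple of `v` or of `ψ̃⁻v`
    (∀ w : V, (∃ a b c d : ℂ, ρ.N w = a • w ∧ ρ.E w = b • w ∧ ρ.Nt w = c • w ∧
        ρ.Et w = d • w) → ρ.pp w = 0 → ρ.tp w = 0 →
      w ∈ Submodule.span ℂ {v} ∨ w ∈ Submodule.span ℂ {ρ.tm v}) ∧
    -- the submodule generated by `ψ̃⁻v` is `span{ψ̃⁻v, ψ̃⁻ψ⁻v}`, 2-dimensional,
    -- invariant, proper, and maximal: it contains every proper invariant submodule
    ρ.Invariant (Submodule.span ℂ {ρ.tm v, ρ.tm (ρ.pm v)}) ∧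
    Module.finrank ℂ (Submodule.span ℂ {ρ.tm v, ρ.tm (ρ.pm v)}) = 2 ∧
    Submodule.span ℂ {ρ.tm v, ρ.tm (ρ.pm v)} ≠ ⊤ ∧
    (∀ W : Submodule ℂ V, ρ.Invariant W → W ≠ ⊤ →
      W ≤ Submodule.span ℂ {ρ.tm v, ρ.tm (ρ.pm v)}) ∧
    -- the irreducible quotient is 2-dimensional
    Module.finrank ℂ (V ⧸ Submodule.span ℂ {ρ.tm v, ρ.tm (ρ.pm v)}) = 2 := by

  obtain ⟨⟨hv0, hNv, hEv, hNtv, hEtv0, hppv, htpv⟩, li, hgen⟩ := h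
  have hEtv : ρ.Et v = 0 := by rw [hEtv0, zero_smul]
  -- pointwise relations
  have rNpm : ∀ x, ρ.N (ρ.pm x) = ρ.pm (ρ.N x) - ρ.pm x := by
    intro x
    have h1 := LinearMap.ext_iff.mp ρ.rel_N_pm x
    simp only [LinearMap.sub_apply, LinearMap.coe_comp, Function.comp_apply,
      LinearMap.neg_apply] at h1
    rw [sub_eq_iff_eq_add] at h1
    rw [h1]; abel
  have rNtm : ∀ x, ρ.N (ρ.tm x) = ρ.tm (ρ.N x) - ρ.tm x := by
    intro x
    have h1 := LinearMap.ext_iff.mp ρ.rel_N_tm x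
    simp only [LinearMap.sub_apply, LinearMap.coe_comp, Function.comp_apply,
      LinearMap.neg_apply] at h1
    rw [sub_eq_iff_eq_add] at h1
    rw [h1]; abel
  have rEpm : ∀ x, ρ.E (ρ.pm x) = ρ.pm (ρ.E x) := fun x => by
    have h1 := LinearMap.ext_iff.mp ρ.rel_E_pm x
    simpa using h1
  have rEtm : ∀ x, ρ.E (ρ.tm x) = ρ.tm (ρ.E x) := fun x => by
    have h1 := LinearMap.ext_iff.mp ρ.rel_E_tm x
    simpa using h1
  have rNtpm : ∀ x, ρ.Nt (ρ.pm x) = ρ.pm (ρ.Nt x) - ρ.tm x := by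
    intro x
    have h1 := LinearMap.ext_iff.mp ρ.rel_Nt_pm x
    simp only [LinearMap.sub_apply, LinearMap.coe_comp, Function.comp_apply,
      LinearMap.neg_apply] at h1
    rw [sub_eq_iff_eq_add] at h1
    rw [h1]; abel
  have rNttm : ∀ x, ρ.Nt (ρ.tm x) = ρ.tm (ρ.Nt x) := fun x => by
    have h1 := LinearMap.ext_iff.mp ρ.rel_Nt_tm x
    simpa using h1
  have rEtpm : ∀ x, ρ.Et (ρ.pm x) = ρ.pm (ρ.Et x) := fun x => by
    have h1 := LinearMap.ext_iff.mp ρ.rel_Et_pm x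
    simpa using h1
  have rEttm : ∀ x, ρ.Et (ρ.tm x) = ρ.tm (ρ.Et x) := fun x => by
    have h1 := LinearMap.ext_iff.mp ρ.rel_Et_tm x
    simpa using h1
  have rpppm : ∀ x, ρ.pp (ρ.pm x) = ρ.E x - ρ.pm (ρ.pp x) := by
    intro x
    have h1 := LinearMap.ext_iff.mp ρ.rel_pp_pm x
    simp only [LinearMap.add_apply, LinearMap.coe_comp, Function.comp_apply] at h1
    rw [eq_sub_iff_add_eq]; exact h1
  have rpptm : ∀ x, ρ.pp (ρ.tm x) = ρ.Et x - ρ.tm (ρ.pp x) := by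
    intro x
    have h1 := LinearMap.ext_iff.mp ρ.rel_pp_tm x
    simp only [LinearMap.add_apply, LinearMap.coe_comp, Function.comp_apply] at h1
    rw [eq_sub_iff_add_eq]; exact h1
  have rtppm : ∀ x, ρ.tp (ρ.pm x) = ρ.Et x - ρ.pm (ρ.tp x) := by
    intro x
    have h1 := LinearMap.ext_iff.mp ρ.rel_pm_tp x
    simp only [LinearMap.add_apply, LinearMap.coe_comp, Function.comp_apply] at h1
    rw [eq_sub_iff_add_eq, add_comm]; exact h1
  have rtptm : ∀ x, ρ.tp (ρ.tm x) = -ρ.tm (ρ.tp x) := by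
    intro x
    have h1 := LinearMap.ext_iff.mp ρ.rel_tp_tm x
    simp only [LinearMap.add_apply, LinearMap.coe_comp, Function.comp_apply,
      LinearMap.zero_apply] at h1
    rw [eq_neg_iff_add_eq_zero]; exact h1
  have rpmpm : ∀ x, ρ.pm (ρ.pm x) = 0 := by
    intro x
    have h1 := LinearMap.ext_iff.mp ρ.rel_pm_pm x
    simpa using h1
  have rpmtm : ∀ x, ρ.pm (ρ.tm x) = -ρ.tm (ρ.pm x) := by
    intro x
    have h1 := LinearMap.ext_iff.mp ρ.rel_pm_tm x
    simp only [LinearMap.add_apply, LinearMap.coe_comp, Function.comp_apply,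
      LinearMap.zero_apply] at h1
    rw [eq_neg_iff_add_eq_zero]; exact h1
  have rtmtm : ∀ x, ρ.tm (ρ.tm x) = 0 := by
    intro x
    have h1 := LinearMap.ext_iff.mp ρ.rel_tm_tm x
    simpa using h1
  -- action table on the basis vectors  v, pm v, tm v, tm (pm v)
  have aN1 : ρ.N (ρ.pm v) = (n - 1) • ρ.pm v := by
    rw [rNpm, hNv, map_smul, sub_smul, one_smul]
  have aN2 : ρ.N (ρ.tm v) = (n - 1) • ρ.tm v := by
    rw [rNtm, hNv, map_smul, sub_smul, one_smul]
  have aN3 : ρ.N (ρ.tm (ρ.pm v)) = (n - 2) • ρ.tm (ρ.pm v) := by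
    rw [rNtm, aN1, map_smul]
    module
  have aE1 : ρ.E (ρ.pm v) = e • ρ.pm v := by rw [rEpm, hEv, map_smul]
  have aE2 : ρ.E (ρ.tm v) = e • ρ.tm v := by rw [rEtm, hEv, map_smul]
  have aE3 : ρ.E (ρ.tm (ρ.pm v)) = e • ρ.tm (ρ.pm v) := by rw [rEtm, aE1, map_smul]
  have aNt1 : ρ.Nt (ρ.pm v) = nt • ρ.pm v - ρ.tm v := by rw [rNtpm, hNtv, map_smul]
  have aNt2 : ρ.Nt (ρ.tm v) = nt • ρ.tm v := by rw [rNttm, hNtv, map_smul]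
  have aNt3 : ρ.Nt (ρ.tm (ρ.pm v)) = nt • ρ.tm (ρ.pm v) := by
    rw [rNttm, aNt1, map_sub, map_smul, rtmtm, sub_zero]
  have aEt1 : ρ.Et (ρ.pm v) = 0 := by rw [rEtpm, hEtv, map_zero]
  have aEt2 : ρ.Et (ρ.tm v) = 0 := by rw [rEttm, hEtv, map_zero]
  have aEt3 : ρ.Et (ρ.tm (ρ.pm v)) = 0 := by rw [rEttm, aEt1, map_zero]
  have app1 : ρ.pp (ρ.pm v) = e • v := by rw [rpppm, hEv, hppv, map_zero, sub_zero]
  have app2 : ρ.pp (ρ.tm v) = 0 := by rw [rpptm, hEtv, hppv, map_zero, sub_zero]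
  have app3 : ρ.pp (ρ.tm (ρ.pm v)) = (-e) • ρ.tm v := by
    rw [rpptm, aEt1, app1, map_smul, zero_sub, neg_smul]
  have apm2 : ρ.pm (ρ.tm v) = -ρ.tm (ρ.pm v) := rpmtm v
  have apm3 : ρ.pm (ρ.tm (ρ.pm v)) = 0 := by rw [rpmtm, rpmpm, map_zero, neg_zero]
  have atp1 : ρ.tp (ρ.pm v) = 0 := by rw [rtppm, hEtv, htpv, map_zero, sub_zero]
  have atp2 : ρ.tp (ρ.tm v) = 0 := by rw [rtptm, htpv, map_zero, neg_zero]
  have atp3 : ρ.tp (ρ.tm (ρ.pm v)) = 0 := by rw [rtptm, atp1, map_zero, neg_zero]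
  have atm2 : ρ.tm (ρ.tm v) = 0 := rtmtm v
  have atm3 : ρ.tm (ρ.tm (ρ.pm v)) = 0 := rtmtm (ρ.pm v)
  -- coefficients lemma
  have licoef : ∀ a b c d : ℂ,
      a • v + b • ρ.pm v + c • ρ.tm v + d • ρ.tm (ρ.pm v) = 0 →
      a = 0 ∧ b = 0 ∧ c = 0 ∧ d = 0 := by
    intro a b c d hsum
    have h4 := Fintype.linearIndependent_iff.mp li ![a, b, c, d]
      (by rw [Fin.sum_univ_four]; simpa using hsum)
    exact ⟨by simpa using h4 0, by simpa using h4 1, by simpa using h4 2, by simpa using h4 3⟩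
  have htmvne : ρ.tm v ≠ 0 := by
    intro h0
    have := (licoef 0 0 1 0 (by rw [h0]; simp)).2.2.1
    exact one_ne_zero this
  -- every vector is a combination of the four basis vectors
  have hspan4 : Submodule.span ℂ ({v, ρ.pm v, ρ.tm v, ρ.tm (ρ.pm v)} : Set V) = ⊤ := by
    apply hgen
    · intro w hw
      have stab : ∀ T : V →ₗ[ℂ] V,
          (∀ s ∈ ({v, ρ.pm v, ρ.tm v, ρ.tm (ρ.pm v)} : Set V),
            T s ∈ Submodule.span ℂ ({v, ρ.pm v, ρ.tm v, ρ.tm (ρ.pm v)} : Set V)) →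
          T w ∈ Submodule.span ℂ ({v, ρ.pm v, ρ.tm v, ρ.tm (ρ.pm v)} : Set V) := by
        intro T hT
        have hle : Submodule.span ℂ ({v, ρ.pm v, ρ.tm v, ρ.tm (ρ.pm v)} : Set V) ≤
            Submodule.comap T (Submodule.span ℂ ({v, ρ.pm v, ρ.tm v, ρ.tm (ρ.pm v)} : Set V)) :=
          Submodule.span_le.mpr hT
        exact hle hw
      have m0 : v ∈ Submodule.span ℂ ({v, ρ.pm v, ρ.tm v, ρ.tm (ρ.pm v)} : Set V) :=
        Submodule.subset_span (by simp)
      have m1 : ρ.pm v ∈ Submodule.span ℂ ({v, ρ.pm v, ρ.tm v, ρ.tm (ρ.pm v)} : Set V) :=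
        Submodule.subset_span (by simp)
      have m2 : ρ.tm v ∈ Submodule.span ℂ ({v, ρ.pm v, ρ.tm v, ρ.tm (ρ.pm v)} : Set V) :=
        Submodule.subset_span (by simp)
      have m3 : ρ.tm (ρ.pm v) ∈ Submodule.span ℂ ({v, ρ.pm v, ρ.tm v, ρ.tm (ρ.pm v)} : Set V) :=
        Submodule.subset_span (by simp)
      refine ⟨stab ρ.N ?_, stab ρ.E ?_, stab ρ.Nt ?_, stab ρ.Et ?_,
        stab ρ.pp ?_, stab ρ.pm ?_, stab ρ.tp ?_, stab ρ.tm ?_⟩ <;>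
        · rintro s hs
          simp only [Set.mem_insert_iff, Set.mem_singleton_iff] at hs
          rcases hs with rfl | rfl | rfl | rfl <;>
            (try simp only [hNv, aN1, aN2, aN3, hEv, aE1, aE2, aE3, hNtv, aNt1, aNt2, aNt3,
              hEtv, aEt1, aEt2, aEt3, hppv, app1, app2, app3, rpmpm, apm2, apm3,
              htpv, atp1, atp2, atp3, atm2, atm3]) <;>
            first
              | exact Submodule.zero_mem _
              | exact Submodule.smul_mem _ _ m0
              | exact Submodule.smul_mem _ _ m1
              | exact Submodule.smul_mem _ _ m2
              | exact Submodule.smul_mem _ _ m3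
              | exact m1
              | exact m2
              | exact m3
              | exact Submodule.sub_mem _ (Submodule.smul_mem _ _ m1) m2
              | exact Submodule.neg_mem _ m3
    · exact Submodule.subset_span (by simp)
  have hrange4 : Set.range ![v, ρ.pm v, ρ.tm v, ρ.tm (ρ.pm v)]
      = ({v, ρ.pm v, ρ.tm v, ρ.tm (ρ.pm v)} : Set V) := by
    simp only [Matrix.range_cons, Matrix.range_empty]; ext x
    simp only [Set.mem_union, Set.mem_insert_iff, Set.mem_singleton_iff,
      Set.mem_empty_iff_false, or_false]
  let B : Module.Basis (Fin 4) ℂ V := Module.Basis.mk li (by rw [hrange4, hspan4])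
  haveI : FiniteDimensional ℂ V := Module.Finite.of_basis B
  have hdimV : Module.finrank ℂ V = 4 := by
    rw [Module.finrank_eq_card_basis B, Fintype.card_fin]
  have hrep : ∀ w : V, ∃ c : Fin 4 → ℂ,
      w = c 0 • v + c 1 • ρ.pm v + c 2 • ρ.tm v + c 3 • ρ.tm (ρ.pm v) := by
    intro w
    refine ⟨fun i => B.repr w i, ?_⟩
    have hs := B.sum_repr w
    rw [Fin.sum_univ_four] at hs
    simp only [B, Module.Basis.mk_repr, Module.Basis.coe_mk, Matrix.cons_val_zero, Matrix.cons_val_one,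
      Matrix.head_cons, Matrix.cons_val_two, Matrix.tail_cons, Matrix.cons_val_three,
      Matrix.head_fin_const] at hs ⊢
    exact hs.symm
  -- linear independence of tm v and tm (pm v)
  have li2 : LinearIndependent ℂ ![ρ.tm v, ρ.tm (ρ.pm v)] := by
    rw [Fintype.linearIndependent_iff]
    intro g hg
    rw [Fin.sum_univ_two] at hg
    simp only [Matrix.cons_val_zero, Matrix.cons_val_one, Matrix.head_cons] at hg
    have := licoef 0 0 (g 0) (g 1) (by rw [zero_smul, zero_smul, zero_add, zero_add]; exact hg)
    intro i
    fin_cases i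
    · exact this.2.2.1
    · exact this.2.2.2
  have hrange2 : Set.range ![ρ.tm v, ρ.tm (ρ.pm v)] = ({ρ.tm v, ρ.tm (ρ.pm v)} : Set V) := by
    simp only [Matrix.range_cons, Matrix.range_empty]; ext x
    simp only [Set.mem_union, Set.mem_insert_iff, Set.mem_singleton_iff,
      Set.mem_empty_iff_false, or_false]
  have hfinS : Module.finrank ℂ (Submodule.span ℂ ({ρ.tm v, ρ.tm (ρ.pm v)} : Set V)) = 2 := by
    rw [← hrange2, finrank_span_eq_card li2, Fintype.card_fin]
  -- S is a proper submodule
  have hSne : Submodule.span ℂ ({ρ.tm v, ρ.tm (ρ.pm v)} : Set V) ≠ ⊤ := by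
    intro htop
    have hv : v ∈ Submodule.span ℂ ({ρ.tm v, ρ.tm (ρ.pm v)} : Set V) := htop ▸ trivial
    obtain ⟨a, b, hab⟩ := Submodule.mem_span_pair.mp hv
    have := (licoef (-1) 0 a b (by
      rw [zero_smul, add_zero, neg_smul, one_smul, add_assoc, neg_add_eq_zero]
      exact hab.symm)).1
    norm_num at this
  -- invariance of S
  have hSinv : ρ.Invariant (Submodule.span ℂ ({ρ.tm v, ρ.tm (ρ.pm v)} : Set V)) := by
    intro w hw
    have stab : ∀ T : V →ₗ[ℂ] V,
        (∀ s ∈ ({ρ.tm v, ρ.tm (ρ.pm v)} : Set V),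
          T s ∈ Submodule.span ℂ ({ρ.tm v, ρ.tm (ρ.pm v)} : Set V)) →
        T w ∈ Submodule.span ℂ ({ρ.tm v, ρ.tm (ρ.pm v)} : Set V) := by
      intro T hT
      have hle : Submodule.span ℂ ({ρ.tm v, ρ.tm (ρ.pm v)} : Set V) ≤
          Submodule.comap T (Submodule.span ℂ ({ρ.tm v, ρ.tm (ρ.pm v)} : Set V)) :=
        Submodule.span_le.mpr hT
      exact hle hw
    have m2 : ρ.tm v ∈ Submodule.span ℂ ({ρ.tm v, ρ.tm (ρ.pm v)} : Set V) :=
      Submodule.subset_span (by simp)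
    have m3 : ρ.tm (ρ.pm v) ∈ Submodule.span ℂ ({ρ.tm v, ρ.tm (ρ.pm v)} : Set V) :=
      Submodule.subset_span (by simp)
    refine ⟨stab ρ.N ?_, stab ρ.E ?_, stab ρ.Nt ?_, stab ρ.Et ?_,
      stab ρ.pp ?_, stab ρ.pm ?_, stab ρ.tp ?_, stab ρ.tm ?_⟩ <;>
      · rintro s hs
        simp only [Set.mem_insert_iff, Set.mem_singleton_iff] at hs
        rcases hs with rfl | rfl <;>
          (try simp only [aN2, aN3, aE2, aE3, aNt2, aNt3, aEt2, aEt3, app2, app3,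
            apm2, apm3, atp2, atp3, atm2, atm3]) <;>
          first
            | exact Submodule.zero_mem _
            | exact Submodule.smul_mem _ _ m2
            | exact Submodule.smul_mem _ _ m3
            | exact Submodule.neg_mem _ m3
  -- key lemma for maximality
  have key : ∀ W : Submodule ℂ V, ρ.Invariant W → W ≠ ⊤ →
      ∀ a c : ℂ, a • v + c • ρ.tm v ∈ W → a = 0 := by
    intro W hInv hWne a c hx
    by_contra ha
    have htmx : ρ.tm (a • v + c • ρ.tm v) ∈ W := (hInv _ hx).2.2.2.2.2.2.2
    have h2 : a • ρ.tm v ∈ W := by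
      rwa [map_add, map_smul, map_smul, atm2, smul_zero, add_zero] at htmx
    have hv2 : ρ.tm v ∈ W := by
      have := W.smul_mem a⁻¹ h2
      rwa [smul_smul, inv_mul_cancel₀ ha, one_smul] at this
    have hav : a • v ∈ W := by
      have := W.sub_mem hx (W.smul_mem c hv2)
      rwa [add_sub_cancel_right] at this
    have hvW : v ∈ W := by
      have := W.smul_mem a⁻¹ hav
      rwa [smul_smul, inv_mul_cancel₀ ha, one_smul] at this
    exact hWne (hgen W hInv hvW)
  refine ⟨⟨app2, atp2, htmvne⟩, ?_, hSinv, hfinS, hSne, ?_, ?_⟩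
  · -- uniqueness of singular vectors
    rintro w ⟨a, b, c, d, hNw, -, -, -⟩ hppw htpw
    obtain ⟨co, hc⟩ := hrep w
    have hppw' : ρ.pp w = (e * co 1) • v + (-(e * co 3)) • ρ.tm v := by
      rw [hc]
      simp only [map_add, map_smul, hppv, app1, app2, app3, smul_zero, smul_smul]
      module
    have hc13 := licoef (e * co 1) 0 (-(e * co 3)) 0 (by
      rw [zero_smul, zero_smul, add_zero, add_zero, ← hppw']; exact hppw)
    have hco1 : co 1 = 0 := by
      rcases mul_eq_zero.mp hc13.1 with h | h
      · exact absurd h he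
      · exact h
    have hco3 : co 3 = 0 := by
      have : e * co 3 = 0 := by
        have := hc13.2.2.1
        linear_combination -this
      rcases mul_eq_zero.mp this with h | h
      · exact absurd h he
      · exact h
    have hc' : w = co 0 • v + co 2 • ρ.tm v := by
      rw [hc, hco1, hco3, zero_smul, zero_smul, add_zero, add_zero]
    have hNw1 : ρ.N w = (n * co 0) • v + ((n - 1) * co 2) • ρ.tm v := by
      rw [hc']
      simp only [map_add, map_smul, hNv, aN2, smul_smul]
      module
    have hNw2 : ρ.N w = (a * co 0) • v + (a * co 2) • ρ.tm v := by
      rw [hNw, hc', smul_add, smul_smul, smul_smul]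
    have hdiff := licoef (n * co 0 - a * co 0) 0 ((n - 1) * co 2 - a * co 2) 0 (by
      rw [zero_smul, zero_smul, add_zero, add_zero, sub_smul, sub_smul]
      have heq : (n * co 0) • v + ((n - 1) * co 2) • ρ.tm v
          = (a * co 0) • v + (a * co 2) • ρ.tm v := by rw [← hNw1, ← hNw2]
      rw [sub_add_sub_comm, heq, sub_self])
    by_cases hc0 : co 0 = 0
    · right
      rw [Submodule.mem_span_singleton]
      exact ⟨co 2, by rw [hc', hc0, zero_smul, zero_add]⟩
    · left
      have ha : a = n := by
        have h1 : (n - a) * co 0 = 0 := by linear_combination hdiff.1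
        rcases mul_eq_zero.mp h1 with h | h
        · exact (sub_eq_zero.mp h).symm
        · exact absurd h hc0
      have hc2 : co 2 = 0 := by
        have h2 := hdiff.2.2.1
        rw [ha] at h2
        linear_combination -h2
      rw [Submodule.mem_span_singleton]
      exact ⟨co 0, by rw [hc', hc2, zero_smul, add_zero]⟩
  · -- maximality
    intro W hInv hWne w hw
    obtain ⟨co, hc⟩ := hrep w
    have hpmw : ρ.pm w = co 0 • ρ.pm v + (-(co 2)) • ρ.tm (ρ.pm v) := by
      rw [hc]
      simp only [map_add, map_smul, rpmpm, apm2, apm3, smul_zero, smul_neg]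
      rw [add_zero, add_zero, neg_smul]
    have hpppmw : ρ.pp (ρ.pm w) = (e * co 0) • v + (e * co 2) • ρ.tm v := by
      rw [hpmw]
      simp only [map_add, map_smul, app1, app3, smul_smul]
      module
    have hmem1 : ρ.pp (ρ.pm w) ∈ W := (hInv _ (hInv _ hw).2.2.2.2.2.1).2.2.2.2.1
    rw [hpppmw] at hmem1
    have hco0 : co 0 = 0 := by
      have := key W hInv hWne _ _ hmem1
      rcases mul_eq_zero.mp this with h | h
      · exact absurd h he
      · exact h
    have hppw' : ρ.pp w = (e * co 1) • v + (-(e * co 3)) • ρ.tm v := by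
      rw [hc]
      simp only [map_add, map_smul, hppv, app1, app2, app3, smul_zero, smul_smul]
      module
    have hmem2 : ρ.pp w ∈ W := (hInv _ hw).2.2.2.2.1
    rw [hppw'] at hmem2
    have hco1 : co 1 = 0 := by
      have := key W hInv hWne _ _ hmem2
      rcases mul_eq_zero.mp this with h | h
      · exact absurd h he
      · exact h
    apply Submodule.mem_span_pair.mpr
    exact ⟨co 2, co 3, by rw [hc, hco0, hco1, zero_smul, zero_smul, zero_add, zero_add]⟩
  · -- quotient dimension
    have hq := Submodule.finrank_quotient_add_finrank
      (Submodule.span ℂ ({ρ.tm v, ρ.tm (ρ.pm v)} : Set V))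
    rw [hfinS, hdimV] at hq
    omega
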